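/- Let H be a complex Hilbert space, A a finite index set, (P_α)_{α∈A} a family of orthogonal projections on H, ψ, φ ∈ H, and β ∈ [0,1]. Then Σ_{α∈A} |⟪ψ, P_α φ⟫| ≤ sqrt( (Σ_{α∈A} ‖P_α ψ‖^{2(1−β)} |⟪ψ, P_α φ⟫|^β) · (Σ_{α∈A} ‖P_α φ‖^{2(1−β)} |⟪φ, P_α ψ⟫|^β) ). -/

import Mathlib

/-- The eigenfunction correlator is bounded by the geometric mean of the two
interpolated eigenfunction correlators:
`Σ_α |⟪ψ, P_α φ⟫| ≤ sqrt(Q(ψ,φ;β) · Q(φ,ψ;β))`. -/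
theorem stmt_16 {H : Type*} [NormedAddCommGroup H] [InnerProductSpace ℂ H] [CompleteSpace H]
    {ι : Type*} [Fintype ι] (P : ι → H →L[ℂ] H)
    (hP : ∀ α, IsIdempotentElem (P α) ∧ IsSelfAdjoint (P α))
    (ψ φ : H) (β : ℝ) (hβ : β ∈ Set.Icc (0 : ℝ) 1) :
    ∑ α, ‖(inner ℂ ψ ((P α) φ))‖ ≤
      Real.sqrt ((∑ α, ‖(P α) ψ‖ ^ (2 * (1 - β))
            * ‖(inner ℂ ψ ((P α) φ))‖ ^ β)
        * (∑ α, ‖(P α) φ‖ ^ (2 * (1 - β))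
            * ‖(inner ℂ φ ((P α) ψ))‖ ^ β)) := by
  obtain ⟨hβ0, hβ1⟩ := hβ
  set c : ι → ℝ := fun α => ‖(inner ℂ ψ ((P α) φ))‖ with hc
  have hcnn : ∀ α, 0 ≤ c α := fun α => norm_nonneg _
  have hsym : ∀ α, ‖(inner ℂ φ ((P α) ψ))‖ = c α := by
    intro α
    have hadj : ContinuousLinearMap.adjoint (P α) = P α :=
      (ContinuousLinearMap.isSelfAdjoint_iff').mp (hP α).2
    have h : (inner ℂ φ ((P α) ψ) : ℂ) = starRingEnd ℂ (inner ℂ ψ ((P α) φ)) := by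
      rw [← inner_conj_symm]
      congr 1
      calc (inner ℂ ((P α) ψ) φ : ℂ) = inner ℂ ψ (ContinuousLinearMap.adjoint (P α) φ) := by
            rw [← ContinuousLinearMap.adjoint_inner_right]
        _ = inner ℂ ψ ((P α) φ) := by rw [hadj]
    rw [h, hc, RCLike.norm_conj]
  have hkey : ∀ α, c α ≤ ‖(P α) ψ‖ * ‖(P α) φ‖ := by
    intro α
    have hadj : ContinuousLinearMap.adjoint (P α) = P α :=
      (ContinuousLinearMap.isSelfAdjoint_iff').mp (hP α).2
    have h1 : (inner ℂ ψ ((P α) φ) : ℂ) = inner ℂ ((P α) ψ) ((P α) φ) := by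
      conv_lhs => rw [← (hP α).1.eq]
      rw [ContinuousLinearMap.mul_apply, ← ContinuousLinearMap.adjoint_inner_left, hadj]
    rw [hc]
    simp only [h1]
    exact norm_inner_le_norm _ _
  set a : ι → ℝ := fun α => ‖(P α) ψ‖ ^ (1 - β) * c α ^ (β / 2) with ha
  set b : ι → ℝ := fun α => ‖(P α) φ‖ ^ (1 - β) * c α ^ (β / 2) with hb
  have hhalf : ∀ α, c α ^ (β / 2) * c α ^ (β / 2) = c α ^ β := by
    intro α
    rw [← sq, ← Real.rpow_natCast (c α ^ (β/2)) 2, ← Real.rpow_mul (hcnn α)]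
    norm_num
  have hsqn : ∀ x : ℝ, 0 ≤ x → (x ^ (1 - β)) ^ 2 = x ^ (2 * (1 - β)) := by
    intro x hx
    rw [← Real.rpow_natCast (x ^ (1 - β)) 2, ← Real.rpow_mul hx]
    norm_num [mul_comm]
  have hterm : ∀ α, c α ≤ a α * b α := by
    intro α
    have h1 : c α = c α ^ (1 - β) * c α ^ β := by
      rw [← Real.rpow_add' (hcnn α) (by norm_num : (1 - β) + β ≠ 0)]
      rw [show (1 - β) + β = 1 by ring, Real.rpow_one]
    calc c α = c α ^ (1 - β) * c α ^ β := h1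
      _ ≤ (‖(P α) ψ‖ * ‖(P α) φ‖) ^ (1 - β) * c α ^ β :=
          mul_le_mul_of_nonneg_right
            (Real.rpow_le_rpow (hcnn α) (hkey α) (by linarith))
            (Real.rpow_nonneg (hcnn α) β)
      _ = a α * b α := by
          simp only [ha, hb]
          rw [Real.mul_rpow (norm_nonneg _) (norm_nonneg _), ← hhalf α]
          ring
  have hsq1 : ∀ α, a α ^ 2 = ‖(P α) ψ‖ ^ (2 * (1 - β)) * c α ^ β := by
    intro α
    simp only [ha]
    rw [mul_pow, hsqn _ (norm_nonneg _), sq, hhalf α]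
  have hsq2 : ∀ α, b α ^ 2 = ‖(P α) φ‖ ^ (2 * (1 - β)) * c α ^ β := by
    intro α
    simp only [hb]
    rw [mul_pow, hsqn _ (norm_nonneg _), sq, hhalf α]
  have e1 : (∑ α, a α ^ 2) = ∑ α, ‖(P α) ψ‖ ^ (2 * (1 - β)) * c α ^ β :=
    Finset.sum_congr rfl fun α _ => hsq1 α
  have e2 : (∑ α, b α ^ 2)
      = ∑ α, ‖(P α) φ‖ ^ (2 * (1 - β)) * ‖(inner ℂ φ ((P α) ψ))‖ ^ β :=
    Finset.sum_congr rfl fun α _ => by rw [hsq2 α, hsym α]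
  calc ∑ α, c α ≤ ∑ α, a α * b α := Finset.sum_le_sum fun α _ => hterm α
    _ ≤ Real.sqrt (∑ α, a α ^ 2) * Real.sqrt (∑ α, b α ^ 2) :=
        Real.sum_mul_le_sqrt_mul_sqrt _ _ _
    _ = Real.sqrt ((∑ α, a α ^ 2) * (∑ α, b α ^ 2)) :=
        (Real.sqrt_mul (Finset.sum_nonneg fun α _ => sq_nonneg _) _).symm
    _ = _ := by rw [e1, e2]
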